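/- Let G and H be vertex-disjoint graphs with n_G ≥ 1 and n_H ≥ 1 vertices, with positive edge weights w_G, w_H and weighted Laplacians L_G, L_H. Set μ_G = λ_max(L_G), μ_H = λ_max(L_H), and α = μ_G/n_H. Assume n_G μ_G > n_H μ_H and H is connected. Let 4C be the weighted Laplacian of the cosum G ∨ H with weights w_G on E(G), w_H on E(H), and α on all edges between V(G) and V(H). Then X* = (−𝟙_G ⊕ 𝟙_H)(−𝟙_G ⊕ 𝟙_H)ᵀ is the unique optimal solution of the MaxCut SDP max{Tr(CX) : diag(X)=𝟙, X⪰0}, and the dual matrix S* = [[μ_G I − L_G, α 𝟙_G 𝟙_Hᵀ],[α 𝟙_H 𝟙_Gᵀ, α n_G I − L_H]] together with y* = 2α(n_H 𝟙_G ⊕ n_G 𝟙_H) is the unique optimal dual solution; moreover (X* + S*)(h ⊕ 0) = 0 for any μ_G-eigenvector h of L_G, so strict complementarity fails. -/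

import Mathlib

open Matrix

/-- The weighted Laplacian matrix of a symmetric weight function `w`
(supported on the edges of a graph). -/
def lapMatrix {V : Type*} [Fintype V] [DecidableEq V] (w : V → V → ℝ) :
    Matrix V V ℝ :=
  Matrix.diagonal (fun i => ∑ j, w i j) - Matrix.of w

section CosumHelpers

open Matrix

lemma psd_form {n : Type*} [Fintype n] {M : Matrix n n ℝ} (hM : M.PosSemidef) (x : n → ℝ) :
    0 ≤ x ⬝ᵥ M *ᵥ x := by simpa using hM.dotProduct_mulVec_nonneg x

lemma psd_form_zero {n : Type*} [Fintype n] {M : Matrix n n ℝ} (hM : M.PosSemidef) (x : n → ℝ)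
    (h : x ⬝ᵥ M *ᵥ x = 0) : M *ᵥ x = 0 := by
  refine (hM.dotProduct_mulVec_zero_iff x).mp ?_
  simpa using h

lemma psd_symm {n : Type*} [Fintype n] {M : Matrix n n ℝ} (hM : M.PosSemidef) (i j : n) :
    M i j = M j i := by
  calc M i j = Mᴴ i j := by rw [hM.1]
    _ = M j i := by simp [Matrix.conjTranspose_apply]

lemma psd_smul {n : Type*} [Fintype n] {M : Matrix n n ℝ} (hM : M.PosSemidef) {c : ℝ}
    (hc : 0 ≤ c) : (c • M).PosSemidef := by
  refine Matrix.PosSemidef.of_dotProduct_mulVec_nonneg ?_ ?_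
  · have h := hM.1
    unfold Matrix.IsHermitian at *
    rw [Matrix.conjTranspose_smul, h]
    simp
  · intro x
    rw [Matrix.smul_mulVec, dotProduct_smul]
    exact smul_nonneg hc (hM.dotProduct_mulVec_nonneg x)

lemma conj_diag_eq_form {n : Type*} [Fintype n] (S B : Matrix n n ℝ) (i : n) :
    (B * S * Bᵀ) i i = (fun j => B i j) ⬝ᵥ S *ᵥ (fun j => B i j) := by
  simp only [Matrix.mul_apply, Matrix.transpose_apply, Matrix.mulVec, dotProduct,
    Finset.sum_mul, Finset.mul_sum]
  rw [Finset.sum_comm]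
  exact Finset.sum_congr rfl fun j _ => Finset.sum_congr rfl fun k _ => by ring

lemma trace_eq_sum {n : Type*} [Fintype n] (M : Matrix n n ℝ) : M.trace = ∑ i, M i i := rfl

lemma posSemidef_eq_ct_mul_self' {n : Type*} [Fintype n] [DecidableEq n] {A : Matrix n n ℝ}
    (hA : A.PosSemidef) : ∃ B : Matrix n n ℝ, A = Bᴴ * B := by
  open scoped MatrixOrder in
  obtain ⟨X, hX, -, rfl⟩ := CFC.exists_sqrt_of_isSelfAdjoint_of_quasispectrumRestricts
    hA.isHermitian (QuasispectrumRestricts.nnreal_of_nonneg hA.nonneg)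
  exact ⟨X, by rw [← Matrix.star_eq_conjTranspose, hX.star_eq]⟩

lemma trace_psd_mul_nonneg {n : Type*} [Fintype n] [DecidableEq n] {S Y : Matrix n n ℝ}
    (hS : S.PosSemidef) (hY : Y.PosSemidef) : 0 ≤ (S * Y).trace := by
  obtain ⟨B, rfl⟩ := posSemidef_eq_ct_mul_self' hY
  have h1 : (S * (Bᴴ * B)).trace = (B * S * Bᴴ).trace := by
    rw [← Matrix.mul_assoc, Matrix.trace_mul_comm, ← Matrix.mul_assoc]
  rw [h1, trace_eq_sum]
  refine Finset.sum_nonneg fun i _ => ?_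
  have hB : Bᴴ = Bᵀ := rfl
  rw [hB, conj_diag_eq_form]
  exact psd_form hS _

lemma psd_mul_trace_zero {n : Type*} [Fintype n] [DecidableEq n] {S Y : Matrix n n ℝ}
    (hS : S.PosSemidef) (hY : Y.PosSemidef) (h : (S * Y).trace = 0) : S * Y = 0 := by
  obtain ⟨B, rfl⟩ := posSemidef_eq_ct_mul_self' hY
  have hB : Bᴴ = Bᵀ := rfl
  have htr : (B * S * Bᵀ).trace = 0 := by
    rw [← hB]
    rw [← Matrix.mul_assoc, Matrix.trace_mul_comm, ← Matrix.mul_assoc] at h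
    exact h
  have hdiag : ∀ i, (B * S * Bᵀ) i i = 0 := by
    intro i
    have hnn : ∀ j ∈ Finset.univ, 0 ≤ (B * S * Bᵀ) j j := fun j _ => by
      rw [conj_diag_eq_form]; exact psd_form hS _
    exact (Finset.sum_eq_zero_iff_of_nonneg hnn).mp (by rw [← trace_eq_sum]; exact htr) i
      (Finset.mem_univ i)
  have hSB : S * Bᵀ = 0 := by
    ext j i
    have h0 : S *ᵥ (fun k => B i k) = 0 := by
      apply psd_form_zero hS
      rw [← conj_diag_eq_form, hdiag]
    have := congrFun h0 j
    simpa [Matrix.mulVec, dotProduct, Matrix.mul_apply, Matrix.transpose_apply] using this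
  rw [← Matrix.mul_assoc, hB, hSB, Matrix.zero_mul]

lemma trace_diag_mul {n : Type*} [Fintype n] [DecidableEq n] (d : n → ℝ) (Y : Matrix n n ℝ) :
    (Matrix.diagonal d * Y).trace = ∑ i, d i * Y i i := by
  rw [trace_eq_sum]
  refine Finset.sum_congr rfl fun i _ => ?_
  simp [Matrix.mul_apply, Matrix.diagonal_apply, Finset.sum_ite_eq]

lemma psd_entry_le {n : Type*} [Fintype n] [DecidableEq n] {X : Matrix n n ℝ}
    (hX : X.PosSemidef) (hdiag : ∀ i, X i i = 1) {i j : n} (hij : i ≠ j) :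
    -1 ≤ X i j ∧ X i j ≤ 1 := by
  have hsym := psd_symm hX j i
  have h1 := psd_form hX (Pi.single i 1 + Pi.single j 1)
  have h2 := psd_form hX (Pi.single i 1 - Pi.single j 1)
  rw [Matrix.mulVec_add, add_dotProduct, dotProduct_add, dotProduct_add]
    at h1
  rw [Matrix.mulVec_sub, sub_dotProduct, dotProduct_sub, dotProduct_sub]
    at h2
  simp only [Matrix.mulVec_single, MulOpposite.op_one, one_smul, Matrix.col_apply,
    single_dotProduct, mul_one, one_mul] at h1 h2
  constructor <;> [nlinarith [hdiag i, hdiag j]; nlinarith [hdiag i, hdiag j]]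

lemma lap_apply {V : Type*} [Fintype V] [DecidableEq V] (w : V → V → ℝ) (i j : V) :
    lapMatrix w i j = (if i = j then ∑ k, w i k else 0) - w i j := by
  simp [lapMatrix, Matrix.diagonal, Matrix.sub_apply]

lemma lap_mulVec_one {V : Type*} [Fintype V] [DecidableEq V] (w : V → V → ℝ) :
    lapMatrix w *ᵥ (fun _ => (1:ℝ)) = 0 := by
  funext i
  simp [Matrix.mulVec, dotProduct, lap_apply, Finset.sum_sub_distrib, Finset.sum_ite_eq]

lemma lap_symm {V : Type*} [Fintype V] [DecidableEq V] {w : V → V → ℝ}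
    (hw : ∀ i j, w i j = w j i) (i j : V) : lapMatrix w i j = lapMatrix w j i := by
  rcases eq_or_ne i j with rfl | h
  · rfl
  · simp [lap_apply, h, Ne.symm h, hw i j]

lemma symm_dot {n : Type*} [Fintype n] {M : Matrix n n ℝ} (hM : ∀ i j, M i j = M j i)
    (x y : n → ℝ) : x ⬝ᵥ M *ᵥ y = y ⬝ᵥ M *ᵥ x := by
  simp only [dotProduct, Matrix.mulVec, dotProduct, Finset.mul_sum]
  rw [Finset.sum_comm]
  exact Finset.sum_congr rfl fun i _ => Finset.sum_congr rfl fun j _ => by rw [hM j i]; ring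

lemma rowsum_of_mulVec_one {m : ℕ} {M : Matrix (Fin m) (Fin m) ℝ}
    (h : M *ᵥ (fun _ => (1:ℝ)) = 0) (i : Fin m) : ∑ j, M i j = 0 := by
  simpa [Matrix.mulVec, dotProduct] using congrFun h i

lemma shift_form {m : ℕ} {M : Matrix (Fin m) (Fin m) ℝ} (hsym : ∀ i j, M i j = M j i)
    (h1 : M *ᵥ (fun _ => (1:ℝ)) = 0) (d : ℝ) (u : Fin m → ℝ) (hm : 0 < m) :
    (u - ((∑ k, u k)/m) • (fun _ => (1:ℝ))) ⬝ᵥ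
        ((d • (1:Matrix (Fin m) (Fin m) ℝ) - M) *ᵥ (u - ((∑ k, u k)/m) • (fun _ => (1:ℝ))))
      = u ⬝ᵥ ((d • (1:Matrix (Fin m) (Fin m) ℝ) - M) *ᵥ u) - d * (∑ k, u k)^2 / m := by
  set t := ∑ k, u k with ht
  set c : ℝ := t / m with hc
  set N : Matrix (Fin m) (Fin m) ℝ := d • 1 - M with hN
  have hNsym : ∀ i j, N i j = N j i := by
    intro i j
    simp [hN, Matrix.sub_apply, Matrix.smul_apply, Matrix.one_apply, hsym i j, eq_comm]
  have hN1 : N *ᵥ (fun _ => (1:ℝ)) = d • (fun _ => (1:ℝ)) := by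
    simp [hN, Matrix.sub_mulVec, h1, Matrix.smul_mulVec]
  have honeu : (fun _ => (1:ℝ)) ⬝ᵥ (N *ᵥ u) = d * t := by
    rw [symm_dot hNsym, hN1]
    simp [dotProduct, Finset.mul_sum, ht, Finset.sum_mul]
    exact Finset.sum_congr rfl fun i _ => by ring
  have huone : u ⬝ᵥ (N *ᵥ (fun _ => (1:ℝ))) = d * t := by
    rw [hN1]
    simp [dotProduct, ht, Finset.mul_sum]
    exact Finset.sum_congr rfl fun i _ => by ring
  have honeone : (fun _ => (1:ℝ)) ⬝ᵥ (N *ᵥ (fun _ => (1:ℝ))) = d * m := by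
    rw [hN1]; simp [dotProduct, Finset.mul_sum]; ring
  have expand : (u - c • (fun _ => (1:ℝ))) ⬝ᵥ (N *ᵥ (u - c • (fun _ => (1:ℝ))))
      = u ⬝ᵥ (N *ᵥ u) - c * ((fun _ => (1:ℝ)) ⬝ᵥ (N *ᵥ u))
        - c * (u ⬝ᵥ (N *ᵥ (fun _ => (1:ℝ)))) + c * c * ((fun _ => (1:ℝ)) ⬝ᵥ (N *ᵥ (fun _ => (1:ℝ)))) := by
    rw [Matrix.mulVec_sub, Matrix.mulVec_smul]
    rw [sub_dotProduct, smul_dotProduct, dotProduct_sub, dotProduct_sub,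
      dotProduct_smul, dotProduct_smul]
    simp [smul_eq_mul]
    ring
  rw [expand, honeu, huone, honeone]
  have hm' : (m:ℝ) ≠ 0 := by positivity
  rw [hc]
  field_simp
  ring

lemma block_mulVec {nG nH : ℕ} (A : Matrix (Fin nG) (Fin nG) ℝ) (B : Matrix (Fin nH) (Fin nH) ℝ)
    (α : ℝ) (x : Fin nG ⊕ Fin nH → ℝ) :
    (Matrix.fromBlocks A (α • Matrix.vecMulVec (fun _ => (1:ℝ)) (fun _ => (1:ℝ)))
      (α • Matrix.vecMulVec (fun _ => (1:ℝ)) (fun _ => (1:ℝ))) B) *ᵥ x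
    = Sum.elim ((A *ᵥ fun i => x (Sum.inl i)) + fun _ => α * ∑ j, x (Sum.inr j))
        ((B *ᵥ fun j => x (Sum.inr j)) + fun _ => α * ∑ i, x (Sum.inl i)) := by
  funext k
  cases k with
  | inl i =>
    simp [Matrix.mulVec, dotProduct, Fintype.sum_sum_type, Matrix.fromBlocks,
      Matrix.vecMulVec_apply, Finset.mul_sum]
  | inr j =>
    simp [Matrix.mulVec, dotProduct, Fintype.sum_sum_type, Matrix.fromBlocks,
      Matrix.vecMulVec_apply, Finset.mul_sum, add_comm]

lemma block_form {nG nH : ℕ} (A : Matrix (Fin nG) (Fin nG) ℝ) (B : Matrix (Fin nH) (Fin nH) ℝ)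
    (α : ℝ) (x : Fin nG ⊕ Fin nH → ℝ) :
    x ⬝ᵥ (Matrix.fromBlocks A (α • Matrix.vecMulVec (fun _ => (1:ℝ)) (fun _ => (1:ℝ)))
      (α • Matrix.vecMulVec (fun _ => (1:ℝ)) (fun _ => (1:ℝ))) B) *ᵥ x
      = (fun i => x (Sum.inl i)) ⬝ᵥ (A *ᵥ fun i => x (Sum.inl i))
        + (fun j => x (Sum.inr j)) ⬝ᵥ (B *ᵥ fun j => x (Sum.inr j))
        + 2 * α * (∑ i, x (Sum.inl i)) * (∑ j, x (Sum.inr j)) := by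
  rw [block_mulVec]
  simp only [dotProduct, Fintype.sum_sum_type, Sum.elim_inl, Sum.elim_inr, Pi.add_apply]
  simp only [mul_add, Finset.sum_add_distrib]
  have h1 : ∑ i : Fin nG, x (Sum.inl i) * (α * ∑ j, x (Sum.inr j))
      = α * (∑ i, x (Sum.inl i)) * (∑ j, x (Sum.inr j)) := by
    rw [← Finset.sum_mul]; ring
  have h2 : ∑ j : Fin nH, x (Sum.inr j) * (α * ∑ i, x (Sum.inl i))
      = α * (∑ i, x (Sum.inl i)) * (∑ j, x (Sum.inr j)) := by
    rw [← Finset.sum_mul]; ring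
  rw [h1, h2]
  ring

lemma main_form {nG nH : ℕ} (hnG : 0 < nG) (hnH : 0 < nH)
    (LG : Matrix (Fin nG) (Fin nG) ℝ) (LH : Matrix (Fin nH) (Fin nH) ℝ)
    (hLGsym : ∀ i j, LG i j = LG j i) (hLHsym : ∀ i j, LH i j = LH j i)
    (hLG1 : LG *ᵥ (fun _ => (1:ℝ)) = 0) (hLH1 : LH *ᵥ (fun _ => (1:ℝ)) = 0)
    (μG α : ℝ) (hμα : μG = α * nH)
    (x : Fin nG ⊕ Fin nH → ℝ)
    (A : Matrix (Fin nG) (Fin nG) ℝ) (hA : A = μG • (1:Matrix (Fin nG) (Fin nG) ℝ) - LG)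
    (B : Matrix (Fin nH) (Fin nH) ℝ) (hB : B = (α * nG) • (1:Matrix (Fin nH) (Fin nH) ℝ) - LH) :
    x ⬝ᵥ (Matrix.fromBlocks A (α • Matrix.vecMulVec (fun _ => (1:ℝ)) (fun _ => (1:ℝ)))
      (α • Matrix.vecMulVec (fun _ => (1:ℝ)) (fun _ => (1:ℝ))) B) *ᵥ x
      = ((fun i => x (Sum.inl i)) - ((∑ i, x (Sum.inl i))/nG) • (fun _ => (1:ℝ))) ⬝ᵥ
          (A *ᵥ ((fun i => x (Sum.inl i)) - ((∑ i, x (Sum.inl i))/nG) • (fun _ => (1:ℝ))))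
        + ((fun j => x (Sum.inr j)) - ((∑ j, x (Sum.inr j))/nH) • (fun _ => (1:ℝ))) ⬝ᵥ
          (B *ᵥ ((fun j => x (Sum.inr j)) - ((∑ j, x (Sum.inr j))/nH) • (fun _ => (1:ℝ))))
        + μG * nG * ((∑ i, x (Sum.inl i))/nG + (∑ j, x (Sum.inr j))/nH)^2 := by
  subst hA hB
  rw [block_form, shift_form hLGsym hLG1 μG _ hnG, shift_form hLHsym hLH1 (α * nG) _ hnH]
  have h1 : (nG:ℝ) ≠ 0 := by positivity
  have h2 : (nH:ℝ) ≠ 0 := by positivity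
  subst hμα
  field_simp
  ring

lemma dual_identity {nG nH : ℕ} (wG : Fin nG → Fin nG → ℝ) (wH : Fin nH → Fin nH → ℝ)
    (α μG : ℝ) (hμα : μG = α * nH) :
    Matrix.diagonal (Sum.elim (fun _ : Fin nG => 2*α*nH) (fun _ : Fin nH => 2*α*nG))
      - lapMatrix (fun u v => Sum.elim (fun i => Sum.elim (fun j => wG i j) (fun _ => α) v)
          (fun i => Sum.elim (fun _ => α) (fun j => wH i j) v) u)
      = Matrix.fromBlocks (μG • (1:Matrix (Fin nG) (Fin nG) ℝ) - lapMatrix wG)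
          (α • Matrix.vecMulVec (fun _ => (1:ℝ)) (fun _ => (1:ℝ)))
          (α • Matrix.vecMulVec (fun _ => (1:ℝ)) (fun _ => (1:ℝ)))
          ((α * nG) • (1:Matrix (Fin nH) (Fin nH) ℝ) - lapMatrix wH) := by
  subst hμα
  ext a b
  rcases a with i | i <;> rcases b with j | j <;>
    simp [lap_apply, Matrix.diagonal, Matrix.fromBlocks, Matrix.sub_apply, Matrix.one_apply,
      Matrix.vecMulVec_apply, Fintype.sum_sum_type, Finset.sum_const, Finset.card_univ,
      mul_comm, Sum.inl.injEq, Sum.inr.injEq] <;>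
    split_ifs <;> ring

lemma sum_forces_one {m : ℕ} (f : Fin m → ℝ) (hb : ∀ i, f i ≤ 1) (hs : ∑ i, f i = m) :
    ∀ i, f i = 1 := by
  intro i
  have h0 : ∑ j, (1 - f j) = 0 := by
    rw [Finset.sum_sub_distrib]
    simp [hs]
  have := (Finset.sum_eq_zero_iff_of_nonneg (fun j _ => by linarith [hb j])).mp h0 i
    (Finset.mem_univ i)
  linarith

lemma sum_forces_neg_one {m : ℕ} (f : Fin m → ℝ) (hb : ∀ i, -1 ≤ f i) (hs : ∑ i, f i = -m) :
    ∀ i, f i = -1 := by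
  intro i
  have := sum_forces_one (fun i => -f i) (fun i => show -f i ≤ 1 by linarith [hb i]) (by
    show ∑ j, -f j = (m:ℝ)
    have : ∑ j, -f j = -∑ j, f j := by simp
    rw [this, hs]; ring) i
  linarith

end CosumHelpers

section CosumHelpers2

open Matrix

lemma vecMulVec_mulVec' {n : Type*} [Fintype n] (a b v : n → ℝ) :
    Matrix.vecMulVec a b *ᵥ v = (b ⬝ᵥ v) • a := by
  funext i
  simp only [Matrix.mulVec, dotProduct, Matrix.vecMulVec_apply, Pi.smul_apply, smul_eq_mul,
    Finset.sum_mul]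
  exact Finset.sum_congr rfl fun j _ => by ring

lemma vecMulVec_self_psd {n : Type*} [Fintype n] (a : n → ℝ) :
    (Matrix.vecMulVec a a).PosSemidef := by
  refine Matrix.PosSemidef.of_dotProduct_mulVec_nonneg ?_ ?_
  · unfold Matrix.IsHermitian
    ext i j
    simp [Matrix.conjTranspose_apply, Matrix.vecMulVec_apply, mul_comm]
  · intro x
    rw [vecMulVec_mulVec']
    simp only [star_trivial, dotProduct_smul, smul_eq_mul]
    rw [dotProduct_comm a x]
    exact mul_self_nonneg _

lemma mul_vecMulVec_zero {n : Type*} [Fintype n] {M : Matrix n n ℝ} {a : n → ℝ}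
    (h : M *ᵥ a = 0) (b : n → ℝ) : M * Matrix.vecMulVec a b = 0 := by
  ext i j
  have h0 : ∑ k, M i k * a k = 0 := by
    simpa [Matrix.mulVec, dotProduct] using congrFun h i
  have : (M * Matrix.vecMulVec a b) i j = (∑ k, M i k * a k) * b j := by
    simp only [Matrix.mul_apply, Matrix.vecMulVec_apply, Finset.sum_mul]
    exact Finset.sum_congr rfl fun k _ => by ring
  rw [this, h0]
  simp

lemma diag_form_e {nG nH : ℕ} (d : Fin nG ⊕ Fin nH → ℝ) :
    Sum.elim (fun _ => (-1:ℝ)) (fun _ => (1:ℝ)) ⬝ᵥ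
      (Matrix.diagonal d *ᵥ Sum.elim (fun _ => (-1:ℝ)) (fun _ => (1:ℝ))) = ∑ k, d k := by
  simp [dotProduct, Matrix.mulVec_diagonal, Fintype.sum_sum_type]

lemma Sstar_mulVec_special {nG nH : ℕ}
    (LG : Matrix (Fin nG) (Fin nG) ℝ) (LH : Matrix (Fin nH) (Fin nH) ℝ)
    (μG α : ℝ) (hμα : μG = α * nH)
    (hLG1 : LG *ᵥ (fun _ => (1:ℝ)) = 0) (hLH1 : LH *ᵥ (fun _ => (1:ℝ)) = 0) :
    (Matrix.fromBlocks (μG • (1:Matrix (Fin nG) (Fin nG) ℝ) - LG)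
        (α • Matrix.vecMulVec (fun _ => (1:ℝ)) (fun _ => (1:ℝ)))
        (α • Matrix.vecMulVec (fun _ => (1:ℝ)) (fun _ => (1:ℝ)))
        ((α * nG) • (1:Matrix (Fin nH) (Fin nH) ℝ) - LH)) *ᵥ
      Sum.elim (fun _ => (-1:ℝ)) (fun _ => (1:ℝ)) = 0 := by
  rw [block_mulVec]
  funext k
  cases k with
  | inl i =>
    have hrow := rowsum_of_mulVec_one hLG1 i
    simp only [Sum.elim_inl, Sum.elim_inr, Pi.add_apply, Matrix.mulVec, dotProduct,
      Matrix.sub_apply, Matrix.smul_apply, Matrix.one_apply, smul_eq_mul, Pi.zero_apply]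
    rw [show (∑ i' : Fin nG, (μG * (if i = i' then 1 else 0) - LG i i') * (-1))
        = -μG * (∑ i' : Fin nG, (if i = i' then 1 else 0)) + ∑ i', LG i i' by
      rw [Finset.mul_sum, ← Finset.sum_add_distrib]
      exact Finset.sum_congr rfl fun i' _ => by ring]
    rw [hrow]
    simp [Finset.sum_ite_eq, hμα, Finset.sum_const, Finset.card_univ]
  | inr j =>
    have hrow := rowsum_of_mulVec_one hLH1 j
    simp only [Sum.elim_inl, Sum.elim_inr, Pi.add_apply, Matrix.mulVec, dotProduct,
      Matrix.sub_apply, Matrix.smul_apply, Matrix.one_apply, smul_eq_mul, Pi.zero_apply]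
    rw [show (∑ j' : Fin nH, (α * nG * (if j = j' then 1 else 0) - LH j j') * 1)
        = α * nG * (∑ j' : Fin nH, (if j = j' then 1 else 0)) - ∑ j', LH j j' by
      rw [Finset.mul_sum, ← Finset.sum_sub_distrib]
      exact Finset.sum_congr rfl fun j' _ => by ring]
    rw [hrow]
    simp [Finset.sum_ite_eq, Finset.sum_const, Finset.card_univ]

lemma Sstar_mulVec_ker {nG nH : ℕ}
    (LG : Matrix (Fin nG) (Fin nG) ℝ) (LH : Matrix (Fin nH) (Fin nH) ℝ)
    (μG α : ℝ) (h : Fin nG → ℝ) (hh : LG *ᵥ h = μG • h) (hsum : ∑ i, h i = 0) :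
    (Matrix.fromBlocks (μG • (1:Matrix (Fin nG) (Fin nG) ℝ) - LG)
        (α • Matrix.vecMulVec (fun _ => (1:ℝ)) (fun _ => (1:ℝ)))
        (α • Matrix.vecMulVec (fun _ => (1:ℝ)) (fun _ => (1:ℝ)))
        ((α * nG) • (1:Matrix (Fin nH) (Fin nH) ℝ) - LH)) *ᵥ
      Sum.elim h (fun _ => 0) = 0 := by
  rw [block_mulVec]
  funext k
  cases k with
  | inl i =>
    have hLh : ∑ i', LG i i' * h i' = μG * h i := by
      simpa [Matrix.mulVec, dotProduct] using congrFun hh i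
    simp only [Sum.elim_inl, Sum.elim_inr, Pi.add_apply, Matrix.mulVec, dotProduct,
      Matrix.sub_apply, Matrix.smul_apply, Matrix.one_apply, smul_eq_mul, Pi.zero_apply]
    rw [show (∑ i' : Fin nG, (μG * (if i = i' then 1 else 0) - LG i i') * h i')
        = μG * (∑ i' : Fin nG, (if i = i' then 1 else 0) * h i') - ∑ i', LG i i' * h i' by
      rw [Finset.mul_sum, ← Finset.sum_sub_distrib]
      exact Finset.sum_congr rfl fun i' _ => by ring]
    rw [hLh]
    simp [Finset.sum_ite_eq]
  | inr j =>
    simp [Matrix.mulVec, dotProduct, hsum]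

end CosumHelpers2

/-- Laurent–Poljak style failure of strict complementarity for cosums `G ∨ H`:
with `4C` the weighted Laplacian of the cosum (weights `wG`, `wH` on the two
parts and `α = μG / nH` on all cross edges), `X* = (−𝟙_G ⊕ 𝟙_H)(−𝟙_G ⊕ 𝟙_H)ᵀ`
is the unique primal optimal solution, `(y*, S*)` is the unique dual optimal
solution (for the Laplacian objective `4C`), `(X* + S*)(h ⊕ 0) = 0` for every
`μG`-eigenvector `h` of `L_G`, and strict complementarity fails. -/
theorem cosum_strict_complementarity_failure
    (nG nH : ℕ) (hnG : 1 ≤ nG) (hnH : 1 ≤ nH)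
    (G : SimpleGraph (Fin nG)) (H : SimpleGraph (Fin nH)) (hH : H.Connected)
    (wG : Fin nG → Fin nG → ℝ) (wH : Fin nH → Fin nH → ℝ)
    (hwGsymm : ∀ i j, wG i j = wG j i) (hwHsymm : ∀ i j, wH i j = wH j i)
    (hwGpos : ∀ i j, G.Adj i j → 0 < wG i j)
    (hwGsupp : ∀ i j, ¬ G.Adj i j → wG i j = 0)
    (hwHpos : ∀ i j, H.Adj i j → 0 < wH i j)
    (hwHsupp : ∀ i j, ¬ H.Adj i j → wH i j = 0)
    (LG : Matrix (Fin nG) (Fin nG) ℝ) (hLG : LG = lapMatrix wG)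
    (LH : Matrix (Fin nH) (Fin nH) ℝ) (hLH : LH = lapMatrix wH)
    (μG μH : ℝ)
    -- `μG` is the largest eigenvalue of `L_G`:
    (hμG₁ : ((μG • (1 : Matrix (Fin nG) (Fin nG) ℝ)) - LG).PosSemidef)
    (hμG₂ : ∃ h : Fin nG → ℝ, h ≠ 0 ∧ LG.mulVec h = μG • h)
    -- `μH` is the largest eigenvalue of `L_H`:
    (hμH₁ : ((μH • (1 : Matrix (Fin nH) (Fin nH) ℝ)) - LH).PosSemidef)
    (hμH₂ : ∃ h : Fin nH → ℝ, h ≠ 0 ∧ LH.mulVec h = μH • h)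
    (hineq : (nH : ℝ) * μH < (nG : ℝ) * μG)
    (α : ℝ) (hα : α = μG / nH)
    -- the cosum weights and the objective matrix `C` with `4 C = L_{G ∨ H}(w̄)`:
    (wbar : (Fin nG ⊕ Fin nH) → (Fin nG ⊕ Fin nH) → ℝ)
    (hwbar : wbar = fun u v =>
      Sum.elim (fun i => Sum.elim (fun j => wG i j) (fun _ => α) v)
        (fun i => Sum.elim (fun _ => α) (fun j => wH i j) v) u)
    (C : Matrix (Fin nG ⊕ Fin nH) (Fin nG ⊕ Fin nH) ℝ)
    (hC : (4 : ℝ) • C = lapMatrix wbar)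
    (Xstar : Matrix (Fin nG ⊕ Fin nH) (Fin nG ⊕ Fin nH) ℝ)
    (hXstar : Xstar = Matrix.vecMulVec
      (Sum.elim (fun _ => (-1 : ℝ)) (fun _ => (1 : ℝ)))
      (Sum.elim (fun _ => (-1 : ℝ)) (fun _ => (1 : ℝ))))
    (Sstar : Matrix (Fin nG ⊕ Fin nH) (Fin nG ⊕ Fin nH) ℝ)
    (hSstar : Sstar = Matrix.fromBlocks
      ((μG • (1 : Matrix (Fin nG) (Fin nG) ℝ)) - LG)
      (α • Matrix.vecMulVec (fun _ => (1 : ℝ)) (fun _ => (1 : ℝ)))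
      (α • Matrix.vecMulVec (fun _ => (1 : ℝ)) (fun _ => (1 : ℝ)))
      (((α * nG) • (1 : Matrix (Fin nH) (Fin nH) ℝ)) - LH))
    (ystar : (Fin nG ⊕ Fin nH) → ℝ)
    (hystar : ystar = Sum.elim (fun _ => 2 * α * nH) (fun _ => 2 * α * nG)) :
    -- primal feasibility/optimality/uniqueness for the MaxCut SDP with objective `C`
    ((Xstar.PosSemidef ∧ ∀ i, Xstar i i = 1) ∧
      (∀ Y : Matrix (Fin nG ⊕ Fin nH) (Fin nG ⊕ Fin nH) ℝ,
        Y.PosSemidef → (∀ i, Y i i = 1) → (C * Y).trace ≤ (C * Xstar).trace) ∧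
      (∀ X : Matrix (Fin nG ⊕ Fin nH) (Fin nG ⊕ Fin nH) ℝ,
        X.PosSemidef → (∀ i, X i i = 1) →
        ((∀ Y, Y.PosSemidef → (∀ i, Y i i = 1) → (C * Y).trace ≤ (C * X).trace) →
          X = Xstar))) ∧
    -- `(y*, S*)` is the dual slack pair for the Laplacian objective `4C`:
    (Matrix.diagonal ystar - (4 : ℝ) • C = Sstar) ∧
    -- dual feasibility/optimality/uniqueness
    (Sstar.PosSemidef ∧
      (∀ y : (Fin nG ⊕ Fin nH) → ℝ, (Matrix.diagonal y - (4 : ℝ) • C).PosSemidef →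
        (∑ i, ystar i) ≤ (∑ i, y i)) ∧
      (∀ y : (Fin nG ⊕ Fin nH) → ℝ, (Matrix.diagonal y - (4 : ℝ) • C).PosSemidef →
        ((∑ i, y i) ≤ (∑ i, ystar i) → y = ystar))) ∧
    -- the common kernel vector witnessing the failure of strict complementarity:
    (∀ h : Fin nG → ℝ, LG.mulVec h = μG • h →
      (Xstar + Sstar).mulVec (Sum.elim h (fun _ => 0)) = 0) ∧
    -- strict complementarity fails for the MaxCut SDP with objective `C` and its dual:
    ¬ ∃ (X : Matrix (Fin nG ⊕ Fin nH) (Fin nG ⊕ Fin nH) ℝ) (y : (Fin nG ⊕ Fin nH) → ℝ),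
        (X.PosSemidef ∧ (∀ i, X i i = 1) ∧
          ∀ Y, Y.PosSemidef → (∀ i, Y i i = 1) → (C * Y).trace ≤ (C * X).trace) ∧
        ((Matrix.diagonal y - C).PosSemidef ∧
          ∀ y', (Matrix.diagonal y' - C).PosSemidef → (∑ i, y i) ≤ (∑ i, y' i)) ∧
        X * (Matrix.diagonal y - C) = 0 ∧
        (X + (Matrix.diagonal y - C)).PosDef := by
  
  -- setup
  subst hLG hLH hwbar
  have hnGR : (0:ℝ) < nG := by exact_mod_cast hnG
  have hnHR : (0:ℝ) < nH := by exact_mod_cast hnH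
  have hLG1 := lap_mulVec_one wG
  have hLH1 := lap_mulVec_one wH
  have hLGsym : ∀ i j, lapMatrix wG i j = lapMatrix wG j i := lap_symm hwGsymm
  have hLHsym : ∀ i j, lapMatrix wH i j = lapMatrix wH j i := lap_symm hwHsymm
  have e_def : True := trivial
  set e : Fin nG ⊕ Fin nH → ℝ := Sum.elim (fun _ => (-1:ℝ)) (fun _ => (1:ℝ)) with he
  -- numeric facts
  have hμH0 : 0 ≤ μH := by
    have h := psd_form hμH₁ (fun _ => (1:ℝ))
    rw [Matrix.sub_mulVec, hLH1, sub_zero, Matrix.smul_mulVec, Matrix.one_mulVec] at h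
    simp only [dotProduct, Pi.smul_apply, smul_eq_mul, mul_one, Finset.sum_const,
      Finset.card_univ, Fintype.card_fin, nsmul_eq_mul] at h
    nlinarith
  have hμGpos : 0 < μG := by nlinarith
  have hμα : μG = α * nH := by rw [hα]; field_simp
  have hαpos : 0 < α := by rw [hα]; positivity
  have hgap : μH < α * nG := by nlinarith
  -- B-block psd
  have hBpsd : ((α * (nG:ℝ)) • (1:Matrix (Fin nH) (Fin nH) ℝ) - lapMatrix wH).PosSemidef := by
    have h2 : (α * (nG:ℝ)) • (1:Matrix (Fin nH) (Fin nH) ℝ) - lapMatrix wH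
        = (α * (nG:ℝ) - μH) • (1:Matrix (Fin nH) (Fin nH) ℝ)
          + (μH • (1:Matrix (Fin nH) (Fin nH) ℝ) - lapMatrix wH) := by
      rw [sub_smul]; abel
    rw [h2]
    exact (psd_smul Matrix.PosSemidef.one (by linarith)).add hμH₁
  -- B-gap bound
  have hBgap : ∀ v : Fin nH → ℝ,
      v ⬝ᵥ (((α * (nG:ℝ)) • (1:Matrix (Fin nH) (Fin nH) ℝ) - lapMatrix wH) *ᵥ v) = 0 → 
      ∀ j, v j = 0 := by
    intro v hv j
    have h2 : (α * (nG:ℝ)) • (1:Matrix (Fin nH) (Fin nH) ℝ) - lapMatrix wH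
        = (α * (nG:ℝ) - μH) • (1:Matrix (Fin nH) (Fin nH) ℝ)
          + (μH • (1:Matrix (Fin nH) (Fin nH) ℝ) - lapMatrix wH) := by
      rw [sub_smul]; abel
    rw [h2, Matrix.add_mulVec, dotProduct_add, Matrix.smul_mulVec,
      Matrix.one_mulVec, dotProduct_smul] at hv
    have h3 := psd_form hμH₁ v
    have hvv : 0 ≤ v ⬝ᵥ v := Finset.sum_nonneg fun i _ => mul_self_nonneg (v i)
    have h4 : v ⬝ᵥ v ≤ 0 := by
      simp only [smul_eq_mul] at hv
      nlinarith
    have h6 : v ⬝ᵥ v = 0 := le_antisymm h4 hvv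
    have h7 := dotProduct_self_eq_zero.mp h6
    exact congrFun h7 j
  -- primal feasibility
  have hXpsd : Xstar.PosSemidef := by rw [hXstar]; exact vecMulVec_self_psd _
  have hXdiag : ∀ i, Xstar i i = 1 := by
    intro i; rw [hXstar]; rcases i with i | i <;> simp [Matrix.vecMulVec_apply, he]
  -- dual identity
  have hSd : Matrix.diagonal ystar - (4:ℝ) • C = Sstar := by
    rw [hC, hystar, hSstar]
    exact dual_identity wG wH α μG hμα
  -- Sstar psd
  have hSpsd : Sstar.PosSemidef := by
    refine Matrix.PosSemidef.of_dotProduct_mulVec_nonneg ?_ ?_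
    · rw [hSstar]
      unfold Matrix.IsHermitian
      ext a b
      rcases a with i | i <;> rcases b with j | j <;>
        simp [Matrix.conjTranspose_apply, Matrix.fromBlocks, Matrix.vecMulVec_apply]
      · exact psd_symm hμG₁ j i
      · exact psd_symm hBpsd j i
    · intro x
      simp only [star_trivial]
      rw [hSstar, main_form hnG hnH _ _ hLGsym hLHsym hLG1 hLH1 μG α hμα x _ rfl _ rfl]
      have h1 := psd_form hμG₁ ((fun i => x (Sum.inl i)) - ((∑ i, x (Sum.inl i))/(nG:ℝ)) • (fun _ => (1:ℝ)))
      have h2 := psd_form hBpsd ((fun j => x (Sum.inr j)) - ((∑ j, x (Sum.inr j))/(nH:ℝ)) • (fun _ => (1:ℝ)))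
      have h3 : 0 ≤ μG * nG * ((∑ i, x (Sum.inl i))/(nG:ℝ) + (∑ j, x (Sum.inr j))/(nH:ℝ))^2 := by
        positivity
      linarith
  -- Sstar annihilates e
  have hSe : Sstar *ᵥ e = 0 := by
    rw [hSstar, he]
    exact Sstar_mulVec_special _ _ μG α hμα hLG1 hLH1
  have hSX : Sstar * Xstar = 0 := by
    rw [hXstar]
    exact mul_vecMulVec_zero hSe _
  -- objective identity
  have hobj : ∀ Y : Matrix (Fin nG ⊕ Fin nH) (Fin nG ⊕ Fin nH) ℝ, (∀ i, Y i i = 1) →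
      4 * (C * Y).trace = (∑ i, ystar i) - (Sstar * Y).trace := by
    intro Y hY
    have h4 : ((4:ℝ) • C * Y).trace = 4 * (C * Y).trace := by
      rw [Matrix.smul_mul, Matrix.trace_smul]; simp
    have h5 : (4:ℝ) • C = Matrix.diagonal ystar - Sstar := by
      rw [← hSd, sub_sub_cancel]
    rw [← h4, h5, Matrix.sub_mul, Matrix.trace_sub, trace_diag_mul]
    have h6 : ∑ i, ystar i * Y i i = ∑ i, ystar i :=
      Finset.sum_congr rfl fun i _ => by rw [hY i, mul_one]
    rw [h6]
  have hSXtr : (Sstar * Xstar).trace = 0 := by rw [hSX]; simp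
  -- primal optimality
  have hpopt : ∀ Y : Matrix (Fin nG ⊕ Fin nH) (Fin nG ⊕ Fin nH) ℝ,
      Y.PosSemidef → (∀ i, Y i i = 1) → (C * Y).trace ≤ (C * Xstar).trace := by
    intro Y hYp hYd
    have h1 := hobj Y hYd
    have h2 := hobj Xstar hXdiag
    have h4 := trace_psd_mul_nonneg hSpsd hYp
    linarith
  -- primal uniqueness
  have hpuniq : ∀ X : Matrix (Fin nG ⊕ Fin nH) (Fin nG ⊕ Fin nH) ℝ,
      X.PosSemidef → (∀ i, X i i = 1) →
      (∀ Y, Y.PosSemidef → (∀ i, Y i i = 1) → (C * Y).trace ≤ (C * X).trace) → X = Xstar := by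
    intro X hXp hXd hXopt
    have htr0 : (Sstar * X).trace = 0 := by
      have h1 := hXopt Xstar hXpsd hXdiag
      have h2 := hobj X hXd
      have h3 := hobj Xstar hXdiag
      have h4 := trace_psd_mul_nonneg hSpsd hXp
      linarith
    have hSX0 : Sstar * X = 0 := psd_mul_trace_zero hSpsd hXp htr0
    have hcol : ∀ k, (fun a => X a k) ⬝ᵥ (Sstar *ᵥ (fun a => X a k)) = 0 := by
      intro k
      have hmv : Sstar *ᵥ (fun a => X a k) = 0 := by
        funext a
        have h := congrFun (congrFun hSX0 a) k
        simpa [Matrix.mul_apply, Matrix.mulVec, dotProduct] using h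
      rw [hmv]; simp
    have hsym : ∀ a b, X a b = X b a := psd_symm hXp
    have hnG' : (nG:ℝ) ≠ 0 := ne_of_gt hnGR
    have hnH' : (nH:ℝ) ≠ 0 := ne_of_gt hnHR
    have hpieces : ∀ k, (∀ j, X (Sum.inr j) k = (∑ j', X (Sum.inr j') k)/(nH:ℝ)) ∧
        (∑ i, X (Sum.inl i) k)/(nG:ℝ) + (∑ j, X (Sum.inr j) k)/(nH:ℝ) = 0 := by
      intro k
      have h := hcol k
      rw [hSstar, main_form hnG hnH _ _ hLGsym hLHsym hLG1 hLH1 μG α hμα _ _ rfl _ rfl] at h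
      have h1 := psd_form hμG₁
        ((fun i => X (Sum.inl i) k) - ((∑ i, X (Sum.inl i) k)/(nG:ℝ)) • (fun _ => (1:ℝ)))
      have h2 := psd_form hBpsd
        ((fun j => X (Sum.inr j) k) - ((∑ j, X (Sum.inr j) k)/(nH:ℝ)) • (fun _ => (1:ℝ)))
      have h3 : 0 ≤ μG * nG *
          ((∑ i, X (Sum.inl i) k)/(nG:ℝ) + (∑ j, X (Sum.inr j) k)/(nH:ℝ))^2 := by positivity
      constructor
      · intro j
        have hform2 : ((fun j => X (Sum.inr j) k) - ((∑ j', X (Sum.inr j') k)/(nH:ℝ)) • (fun _ => (1:ℝ))) ⬝ᵥ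
            ((((α * (nG:ℝ)) • (1:Matrix (Fin nH) (Fin nH) ℝ) - lapMatrix wH)) *ᵥ
              ((fun j => X (Sum.inr j) k) - ((∑ j', X (Sum.inr j') k)/(nH:ℝ)) • (fun _ => (1:ℝ)))) = 0 := by
          linarith
        have hv0 := hBgap _ hform2 j
        simp only [Pi.sub_apply, Pi.smul_apply, smul_eq_mul, mul_one] at hv0
        linarith
      · have h4 : μG * nG *
            ((∑ i, X (Sum.inl i) k)/(nG:ℝ) + (∑ j, X (Sum.inr j) k)/(nH:ℝ))^2 = 0 := by
          linarith
        have hne : μG * (nG:ℝ) ≠ 0 := by positivity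
        have h5 := (mul_eq_zero.mp h4).resolve_left hne
        exact (pow_eq_zero_iff two_ne_zero).mp h5
    have hHH : ∀ j j', X (Sum.inr j) (Sum.inr j') = 1 := by
      intro j j'
      have hP := (hpieces (Sum.inr j')).1
      have h1 := hP j'
      rw [hXd (Sum.inr j')] at h1
      rw [hP j, ← h1]
    have hsH1 : ∀ j', ∑ j, X (Sum.inr j) (Sum.inr j') = (nH:ℝ) := by
      intro j'
      rw [Finset.sum_congr rfl fun j _ => hHH j j']
      simp
    have hsG1 : ∀ j', ∑ i, X (Sum.inl i) (Sum.inr j') = -(nG:ℝ) := by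
      intro j'
      have h2 := (hpieces (Sum.inr j')).2
      rw [hsH1 j', div_self hnH'] at h2
      have h3 : (∑ i, X (Sum.inl i) (Sum.inr j'))/(nG:ℝ) = -1 := by linarith
      field_simp at h3
      linarith
    have hGH : ∀ i j, X (Sum.inl i) (Sum.inr j) = -1 := by
      intro i j
      refine sum_forces_neg_one (fun i => X (Sum.inl i) (Sum.inr j)) (fun i' => ?_) ?_ i
      · exact (psd_entry_le hXp hXd (by simp)).1
      · exact hsG1 j
    have hHG : ∀ j i, X (Sum.inr j) (Sum.inl i) = -1 := fun j i => by rw [hsym, hGH]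
    have hsHl : ∀ i, ∑ j, X (Sum.inr j) (Sum.inl i) = -(nH:ℝ) := by
      intro i
      rw [Finset.sum_congr rfl fun j _ => hHG j i]
      simp
    have hsGl : ∀ i, ∑ i', X (Sum.inl i') (Sum.inl i) = (nG:ℝ) := by
      intro i
      have h2 := (hpieces (Sum.inl i)).2
      rw [hsHl i] at h2
      have h4 : -(nH:ℝ)/(nH:ℝ) = -1 := by field_simp
      rw [h4] at h2
      have h3 : (∑ i', X (Sum.inl i') (Sum.inl i))/(nG:ℝ) = 1 := by linarith
      field_simp at h3
      linarith
    have hGG : ∀ i i', X (Sum.inl i) (Sum.inl i') = 1 := by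
      intro i i'
      refine sum_forces_one (fun i => X (Sum.inl i) (Sum.inl i')) (fun i'' => ?_) (hsGl i') i
      rcases eq_or_ne i'' i' with rfl | hne
      · exact le_of_eq (hXd _)
      · exact (psd_entry_le hXp hXd (by simp [hne])).2
    rw [hXstar]
    ext a b
    rcases a with i | i <;> rcases b with j | j <;>
      simp [Matrix.vecMulVec_apply, he, hGG, hGH, hHG, hHH]
  -- dual optimality
  have hdecomp : ∀ y : (Fin nG ⊕ Fin nH) → ℝ, Matrix.diagonal y - (4:ℝ) • C
      = Matrix.diagonal (fun k => y k - ystar k) + Sstar := by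
    intro y
    rw [← hSd]
    ext a b
    simp only [Matrix.sub_apply, Matrix.add_apply, Matrix.diagonal_apply]
    split_ifs <;> ring
  have hdform : ∀ y : (Fin nG ⊕ Fin nH) → ℝ,
      e ⬝ᵥ ((Matrix.diagonal y - (4:ℝ) • C) *ᵥ e) = ∑ k, y k - ∑ k, ystar k := by
    intro y
    rw [hdecomp y, Matrix.add_mulVec, dotProduct_add, hSe, dotProduct_zero,
      add_zero, he, diag_form_e]
    rw [Finset.sum_sub_distrib]
  have hdopt : ∀ y : (Fin nG ⊕ Fin nH) → ℝ, (Matrix.diagonal y - (4:ℝ)•C).PosSemidef →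
      (∑ i, ystar i) ≤ (∑ i, y i) := by
    intro y hy
    have hform := psd_form hy e
    rw [hdform y] at hform
    linarith
  have hduniq : ∀ y : (Fin nG ⊕ Fin nH) → ℝ, (Matrix.diagonal y - (4:ℝ)•C).PosSemidef →
      ((∑ i, y i) ≤ (∑ i, ystar i) → y = ystar) := by
    intro y hy hle
    have hge := hdopt y hy
    have h0 : e ⬝ᵥ ((Matrix.diagonal y - (4:ℝ) • C) *ᵥ e) = 0 := by
      rw [hdform y]; linarith
    have hz := psd_form_zero hy e h0
    rw [hdecomp y, Matrix.add_mulVec, hSe, add_zero] at hz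
    funext k
    have hk := congrFun hz k
    rw [Matrix.mulVec_diagonal] at hk
    rcases k with i | i
    · have hek : e (Sum.inl i) = -1 := by rw [he]; simp
      rw [hek] at hk
      simp only [Pi.zero_apply] at hk
      linarith [hk]
    · have hek : e (Sum.inr i) = 1 := by rw [he]; simp
      rw [hek] at hk
      simp only [Pi.zero_apply] at hk
      linarith [hk]
  -- kernel vector
  have hsum0 : ∀ h : Fin nG → ℝ, lapMatrix wG *ᵥ h = μG • h → ∑ i, h i = 0 := by
    intro h hh
    have h1 : (fun _ => (1:ℝ)) ⬝ᵥ (lapMatrix wG *ᵥ h) = 0 := by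
      rw [symm_dot hLGsym, hLG1]
      simp
    rw [hh] at h1
    have h2 : μG * ∑ i, h i = 0 := by
      rw [Finset.mul_sum]
      simpa [dotProduct, smul_eq_mul] using h1
    exact (mul_eq_zero.mp h2).resolve_left (ne_of_gt hμGpos)
  have hXz : ∀ h : Fin nG → ℝ, (∑ i, h i = 0) →
      Xstar *ᵥ Sum.elim h (fun _ => (0:ℝ)) = 0 := by
    intro h hs
    rw [hXstar, vecMulVec_mulVec']
    have hd : e ⬝ᵥ Sum.elim h (fun _ => (0:ℝ)) = 0 := by
      rw [he]
      simp [dotProduct, Fintype.sum_sum_type, hs]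
    rw [hd, zero_smul]
  have hSz : ∀ h : Fin nG → ℝ, lapMatrix wG *ᵥ h = μG • h →
      Sstar *ᵥ Sum.elim h (fun _ => (0:ℝ)) = 0 := by
    intro h hh
    rw [hSstar]
    exact Sstar_mulVec_ker _ _ μG α h hh (hsum0 h hh)
  have hker : ∀ h : Fin nG → ℝ, lapMatrix wG *ᵥ h = μG • h →
      (Xstar + Sstar) *ᵥ (Sum.elim h (fun _ => 0)) = 0 := by
    intro h hh
    rw [Matrix.add_mulVec, hXz h (hsum0 h hh), hSz h hh, add_zero]
  refine ⟨⟨⟨hXpsd, hXdiag⟩, hpopt, hpuniq⟩, hSd, ⟨hSpsd, hdopt, hduniq⟩, hker, ?_⟩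
  rintro ⟨X, y, ⟨hXp, hXd, hXopt⟩, ⟨hyf, hyopt⟩, hcomp, hPD⟩
  have h4y : (Matrix.diagonal (fun k => 4 * y k) - (4:ℝ)•C).PosSemidef := by
    have hrw : Matrix.diagonal (fun k => 4 * y k) - (4:ℝ)•C
        = (4:ℝ) • (Matrix.diagonal y - C) := by
      ext a b
      simp only [Matrix.sub_apply, Matrix.smul_apply, Matrix.diagonal_apply, smul_eq_mul]
      split_ifs <;> ring
    rw [hrw]
    exact psd_smul hyf (by norm_num)
  have hq : (Matrix.diagonal (fun k => ystar k / 4) - C).PosSemidef := by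
    have hrw : Matrix.diagonal (fun k => ystar k / 4) - C
        = (4⁻¹:ℝ) • (Matrix.diagonal ystar - (4:ℝ)•C) := by
      ext a b
      simp only [Matrix.sub_apply, Matrix.smul_apply, Matrix.diagonal_apply, smul_eq_mul]
      split_ifs <;> ring
    rw [hrw, hSd]
    exact psd_smul hSpsd (by norm_num)
  have hle : (∑ k, 4 * y k) ≤ ∑ k, ystar k := by
    have h1 := hyopt _ hq
    have h2 : ∑ k, ystar k / 4 = (∑ k, ystar k)/4 := by rw [Finset.sum_div]
    rw [← Finset.mul_sum]
    linarith [h1, h2]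
  have hyeq : (fun k => 4 * y k) = ystar := hduniq _ h4y hle
  have hSy : Matrix.diagonal y - C = (4⁻¹:ℝ) • Sstar := by
    rw [← hSd, ← hyeq]
    ext a b
    simp only [Matrix.sub_apply, Matrix.smul_apply, Matrix.diagonal_apply, smul_eq_mul]
    split_ifs <;> ring
  have hXeq : X = Xstar := hpuniq X hXp hXd hXopt
  obtain ⟨h, hh0, hhv⟩ := hμG₂
  have hz0 : Sum.elim h (fun _ : Fin nH => (0:ℝ)) ≠ 0 := by
    intro hz
    apply hh0
    funext i
    have := congrFun hz (Sum.inl i)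
    simpa using this
  have hXSz : (X + (Matrix.diagonal y - C)) *ᵥ Sum.elim h (fun _ => (0:ℝ)) = 0 := by
    rw [hXeq, hSy, Matrix.add_mulVec, Matrix.smul_mulVec, hXz h (hsum0 h hhv),
      hSz h hhv, smul_zero, add_zero]
  have hpos := hPD.dotProduct_mulVec_pos hz0
  rw [hXSz] at hpos
  simp at hpos
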